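/- Let l ≥ 1 and n ≥ l be integers. Then the probability that the one-sided random walk visits state l within its first n steps satisfies P(N(l, n) > 0) ≤ (n − l + 1) · ((1 − q/p)/(1 − (q/p)^{l+1})) · (q/p)^{l} + (2√(pq)/(1 − 2√(pq))²) · (2q)^{l}. -/

import Mathlib

open Finset

namespace Stmt0Aux

/-- step value of a Bool -/
def stp (b : Bool) : ℤ := if b then 1 else -1

/-- partial sums of the free walk -/
def Sf (b : ℕ → Bool) : ℕ → ℤ
  | 0 => 0
  | (k+1) => Sf b k + stp (b k)

/-- running maximum -/
def Mf (b : ℕ → Bool) : ℕ → ℤ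
  | 0 => 0
  | (k+1) => max (Mf b k) (Sf b (k+1))

/-- running minimum -/
def Nf (b : ℕ → Bool) : ℕ → ℤ
  | 0 => 0
  | (k+1) => min (Nf b k) (Sf b (k+1))

/-- the reflected walk -/
def Zf (b : ℕ → Bool) : ℕ → ℕ
  | 0 => 0
  | (k+1) => if b k then Zf b k + 1 else Zf b k - 1

lemma Sf_eq_sum (b : ℕ → Bool) (k : ℕ) : Sf b k = ∑ i ∈ range k, stp (b i) := by
  induction k with
  | zero => simp [Sf]
  | succ k ih => rw [Sf, ih, Finset.sum_range_succ]

lemma Sf_congr {b c : ℕ → Bool} {k : ℕ} (h : ∀ i < k, b i = c i) : Sf b k = Sf c k := by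
  rw [Sf_eq_sum, Sf_eq_sum]
  exact Finset.sum_congr rfl fun i hi => by rw [h i (mem_range.mp hi)]

lemma Mf_congr {b c : ℕ → Bool} {k : ℕ} (h : ∀ i < k, b i = c i) : Mf b k = Mf c k := by
  induction k with
  | zero => rfl
  | succ k ih =>
    rw [Mf, Mf, ih (fun i hi => h i (Nat.lt_succ_of_lt hi)), Sf_congr h]

lemma Zf_congr {b c : ℕ → Bool} {k : ℕ} (h : ∀ i < k, b i = c i) : Zf b k = Zf c k := by
  induction k with
  | zero => rfl
  | succ k ih =>
    rw [Zf, Zf, ih (fun i hi => h i (Nat.lt_succ_of_lt hi)), h k (Nat.lt_succ_self k)]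

lemma Nf_le_Sf (b : ℕ → Bool) (k : ℕ) : Nf b k ≤ Sf b k := by
  induction k with
  | zero => simp [Nf, Sf]
  | succ k ih => exact min_le_right _ _

lemma Sf_le_Mf (b : ℕ → Bool) (k : ℕ) : Sf b k ≤ Mf b k := by
  induction k with
  | zero => simp [Mf, Sf]
  | succ k ih => exact le_max_right _ _

lemma Mf_nonneg (b : ℕ → Bool) (k : ℕ) : 0 ≤ Mf b k := by
  induction k with
  | zero => simp [Mf]
  | succ k ih => exact le_trans ih (le_max_left _ _)

lemma Nf_le (b : ℕ → Bool) {t k : ℕ} (h : t ≤ k) : Nf b k ≤ Sf b t := by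
  induction k with
  | zero =>
    have : t = 0 := Nat.le_zero.mp h
    subst this; exact le_refl _
  | succ k ih =>
    rcases Nat.lt_succ_iff_lt_or_eq.mp (Nat.lt_succ_of_le h) with h' | h'
    · exact le_trans (min_le_left _ _) (ih (Nat.lt_succ_iff.mp h'))
    · subst h'; exact min_le_right _ _

lemma Mf_ge (b : ℕ → Bool) {t k : ℕ} (h : t ≤ k) : Sf b t ≤ Mf b k := by
  induction k with
  | zero =>
    have : t = 0 := Nat.le_zero.mp h
    subst this; exact le_refl _
  | succ k ih =>
    rcases Nat.lt_succ_iff_lt_or_eq.mp (Nat.lt_succ_of_le h) with h' | h'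
    · exact le_trans (ih (Nat.lt_succ_iff.mp h')) (le_max_left _ _)
    · subst h'; exact le_max_right _ _

lemma Nf_ex (b : ℕ → Bool) (k : ℕ) : ∃ t ≤ k, Nf b k = Sf b t := by
  induction k with
  | zero => exact ⟨0, le_refl 0, rfl⟩
  | succ k ih =>
    obtain ⟨t, ht, he⟩ := ih
    rcases min_cases (Nf b k) (Sf b (k+1)) with ⟨h1, _⟩ | ⟨h1, _⟩
    · exact ⟨t, le_trans ht (Nat.le_succ k), by rw [Nf, h1, he]⟩
    · exact ⟨k+1, le_refl _, by rw [Nf, h1]⟩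

lemma Mf_ex (b : ℕ → Bool) (k : ℕ) : ∃ t ≤ k, Mf b k = Sf b t := by
  induction k with
  | zero => exact ⟨0, le_refl 0, rfl⟩
  | succ k ih =>
    obtain ⟨t, ht, he⟩ := ih
    rcases max_cases (Mf b k) (Sf b (k+1)) with ⟨h1, _⟩ | ⟨h1, _⟩
    · exact ⟨t, le_trans ht (Nat.le_succ k), by rw [Mf, h1, he]⟩
    · exact ⟨k+1, le_refl _, by rw [Mf, h1]⟩

lemma Zf_le (b : ℕ → Bool) (k : ℕ) : Zf b k ≤ k := by
  induction k with
  | zero => exact le_refl 0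
  | succ k ih =>
    rw [Zf]
    split
    · omega
    · omega

/-- Lindley's identity -/
lemma Zf_lindley (b : ℕ → Bool) (k : ℕ) : (Zf b k : ℤ) = Sf b k - Nf b k := by
  induction k with
  | zero => simp [Zf, Sf, Nf]
  | succ k ih =>
    have hns := Nf_le_Sf b k
    rw [Zf, Nf, Sf]
    by_cases hb : b k
    · simp only [hb, if_true, stp]
      have hmin : min (Nf b k) (Sf b k + 1) = Nf b k := by
        rw [min_eq_left]; omega
      rw [hmin]; push_cast; omega
    · simp only [hb, if_false, stp, Bool.false_eq_true]
      rcases Nat.eq_zero_or_pos (Zf b k) with h0 | h0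
      · have hsn : Sf b k = Nf b k := by omega
        have hmin : min (Nf b k) (Sf b k + -1) = Sf b k + -1 := by
          rw [min_eq_right]; omega
        rw [hmin, h0]; simp
      · have hz1 : (1:ℕ) ≤ Zf b k := h0
        have h1 : (1:ℤ) ≤ Sf b k - Nf b k := by omega
        have hmin : min (Nf b k) (Sf b k + -1) = Nf b k := by
          rw [min_eq_left]; omega
        rw [hmin]
        push_cast [Nat.cast_sub hz1]
        omega


/-- reversal of the first `k` coordinates -/
def revN (k : ℕ) (b : ℕ → Bool) : ℕ → Bool := fun i => b (k - 1 - i)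

lemma Sf_rev (b : ℕ → Bool) {t k : ℕ} (h : t ≤ k) :
    Sf (revN k b) t = Sf b k - Sf b (k - t) := by
  rw [Sf_eq_sum, Sf_eq_sum, Sf_eq_sum]
  rw [eq_sub_iff_add_eq, add_comm]
  simp only [Finset.range_eq_Ico]
  rw [← Finset.sum_Ico_consecutive _ (Nat.zero_le (k-t)) (Nat.sub_le k t)]
  congr 1
  apply Finset.sum_nbij' (fun i => k - 1 - i) (fun i => k - 1 - i)
  · intro a ha
    simp only [Finset.mem_Ico] at ha ⊢
    omega
  · intro a ha
    simp only [Finset.mem_Ico] at ha ⊢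
    omega
  · intro a ha
    simp only [Finset.mem_Ico] at ha
    omega
  · intro a ha
    simp only [Finset.mem_Ico] at ha
    omega
  · intro a ha
    simp only [revN]

lemma Zf_rev (b : ℕ → Bool) (k : ℕ) : (Zf (revN k b) k : ℤ) = Mf b k := by
  rw [Zf_lindley]
  have hSk : Sf (revN k b) k = Sf b k := by
    rw [Sf_rev b (le_refl k)]; simp [Sf]
  have hN : Nf (revN k b) k = Sf b k - Mf b k := by
    apply le_antisymm
    · obtain ⟨t₀, ht₀, hM⟩ := Mf_ex b k
      have h1 : Nf (revN k b) k ≤ Sf (revN k b) (k - t₀) := Nf_le _ (Nat.sub_le k t₀)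
      rw [Sf_rev b (Nat.sub_le k t₀)] at h1
      have : k - (k - t₀) = t₀ := by omega
      rw [this, ← hM] at h1
      exact h1
    · obtain ⟨t₁, ht₁, hN⟩ := Nf_ex (revN k b) k
      rw [hN, Sf_rev b ht₁]
      have := Mf_ge b (Nat.sub_le k t₁)
      omega
  rw [hSk, hN]; ring


/-- extend a finite tuple by `false` -/
def extv {k : ℕ} (v : Fin k → Bool) : ℕ → Bool :=
  fun i => if h : i < k then v ⟨i, h⟩ else false

lemma extv_snoc_lt {k : ℕ} (w : Fin k → Bool) (b : Bool) {i : ℕ} (h : i < k) :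
    extv (Fin.snoc w b) i = extv w i := by
  have h' : i < k + 1 := Nat.lt_succ_of_lt h
  simp only [extv, dif_pos h, dif_pos h']
  have : (⟨i, h'⟩ : Fin (k+1)) = Fin.castSucc ⟨i, h⟩ := rfl
  rw [this, Fin.snoc_castSucc]

lemma extv_snoc_last {k : ℕ} (w : Fin k → Bool) (b : Bool) :
    extv (Fin.snoc w b) k = b := by
  have h' : k < k + 1 := Nat.lt_succ_self k
  simp only [extv, dif_pos h']
  have : (⟨k, h'⟩ : Fin (k+1)) = Fin.last k := rfl
  rw [this, Fin.snoc_last]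

lemma Sf_extv_snoc {k t : ℕ} (w : Fin k → Bool) (b : Bool) (ht : t ≤ k) :
    Sf (extv (Fin.snoc w b)) t = Sf (extv w) t :=
  Sf_congr fun i hi => extv_snoc_lt w b (lt_of_lt_of_le hi ht)

lemma Mf_extv_snoc {k t : ℕ} (w : Fin k → Bool) (b : Bool) (ht : t ≤ k) :
    Mf (extv (Fin.snoc w b)) t = Mf (extv w) t :=
  Mf_congr fun i hi => extv_snoc_lt w b (lt_of_lt_of_le hi ht)

lemma Sf_extv_snoc_succ {k : ℕ} (w : Fin k → Bool) (b : Bool) :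
    Sf (extv (Fin.snoc w b)) (k+1) = Sf (extv w) k + stp b := by
  rw [Sf, Sf_extv_snoc w b (le_refl k), extv_snoc_last]

/-- summing over tuples via snoc -/
lemma sum_pi_succ {M : Type*} [AddCommMonoid M] {k : ℕ} (F : (Fin (k+1) → Bool) → M) :
    ∑ v, F v = ∑ w : Fin k → Bool, ∑ b, F (Fin.snoc w b) := by
  rw [← Equiv.sum_comp (Fin.snocEquiv fun _ => Bool) F, Fintype.sum_prod_type,
    Finset.sum_comm]
  rfl

section Weights

variable {p q : ℝ}

/-- weight of a single step -/
def wt (p q : ℝ) (b : Bool) : ℝ := if b then q else p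

/-- weight of a tuple -/
def W (p q : ℝ) {k : ℕ} (v : Fin k → Bool) : ℝ := ∏ i, wt p q (v i)

lemma wt_nonneg (hp : 0 ≤ p) (hq : 0 ≤ q) (b : Bool) : 0 ≤ wt p q b := by
  unfold wt; split <;> assumption

lemma W_nonneg (hp : 0 ≤ p) (hq : 0 ≤ q) {k : ℕ} (v : Fin k → Bool) : 0 ≤ W p q v :=
  Finset.prod_nonneg fun i _ => wt_nonneg hp hq _

lemma W_snoc {k : ℕ} (w : Fin k → Bool) (b : Bool) :
    W p q (Fin.snoc w b) = W p q w * wt p q b := by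
  unfold W
  rw [Fin.prod_univ_castSucc]
  congr 1
  · exact Finset.prod_congr rfl fun i _ => by rw [Fin.snoc_castSucc]
  · rw [Fin.snoc_last]

lemma sum_wt (hpq : p + q = 1) : ∑ b, wt p q b = 1 := by
  simp [wt, Fintype.sum_bool]; linarith

lemma sum_W (hpq : p + q = 1) (k : ℕ) : ∑ v : Fin k → Bool, W p q v = 1 := by
  induction k with
  | zero => simp [W]
  | succ k ih =>
    rw [sum_pi_succ]
    calc ∑ w : Fin k → Bool, ∑ b, W p q (Fin.snoc w b)
        = ∑ w : Fin k → Bool, W p q w * 1 := by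
          refine Finset.sum_congr rfl fun w _ => ?_
          rw [← sum_wt hpq, Finset.mul_sum]
          exact Finset.sum_congr rfl fun b _ => (W_snoc w b)
      _ = 1 := by simpa using ih


lemma step_sum (θ : ℝ) (hθ : θ ≠ 0) (s : ℤ) :
    ∑ b, wt p q b * θ^(s + stp b) = (q*θ + p*θ⁻¹) * θ^s := by
  rw [Fintype.sum_bool]
  show wt p q true * θ^(s + 1) + wt p q false * θ^(s + (-1)) = _
  show q * θ^(s + 1) + p * θ^(s + (-1)) = _
  rw [zpow_add₀ hθ, zpow_add₀ hθ, zpow_one, zpow_neg_one]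
  ring

/-- Chernoff-type identity -/
lemma chern (hpq : p + q = 1) (θ : ℝ) (hθ : θ ≠ 0) (k : ℕ) :
    ∑ v : Fin k → Bool, W p q v * θ^(Sf (extv v) k) = (q*θ + p*θ⁻¹)^k := by
  induction k with
  | zero => simp [W, Sf]
  | succ k ih =>
    rw [sum_pi_succ]
    calc ∑ w : Fin k → Bool, ∑ b, W p q (Fin.snoc w b) * θ^(Sf (extv (Fin.snoc w b)) (k+1))
        = ∑ w : Fin k → Bool, (q*θ + p*θ⁻¹) * (W p q w * θ^(Sf (extv w) k)) := by
          refine Finset.sum_congr rfl fun w _ => ?_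
          have he : ∀ b, W p q (Fin.snoc w b) * θ^(Sf (extv (Fin.snoc w b)) (k+1))
              = W p q w * (wt p q b * θ^(Sf (extv w) k + stp b)) := by
            intro b
            rw [W_snoc, Sf_extv_snoc_succ]
            ring
          simp only [he]
          rw [← Finset.mul_sum, step_sum θ hθ]
          ring
      _ = (q*θ + p*θ⁻¹)^(k+1) := by
          rw [← Finset.mul_sum, ih, pow_succ]
          ring

lemma stp_le_one (b : Bool) : stp b ≤ 1 := by cases b <;> simp [stp]

/-- the optional stopping identity -/
lemma core (hpq : p + q = 1) (hp0 : 0 < p) (hq0 : 0 < q) {a : ℤ} (ha : 1 ≤ a) (k : ℕ) :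
    ∑ v : Fin k → Bool, W p q v *
      (if a ≤ Mf (extv v) k then (p/q)^a else (p/q)^(Sf (extv v) k)) = 1 := by
  have hu1 : q * (p/q) + p * (p/q)⁻¹ = 1 := by
    field_simp
    linarith
  have hune : (p/q) ≠ 0 := ne_of_gt (div_pos hp0 hq0)
  induction k with
  | zero =>
    have hna : ¬ a ≤ (0:ℤ) := by omega
    rw [Fintype.sum_eq_single (fun i : Fin 0 => false) (fun v hv => absurd (funext fun i => i.elim0) hv)]
    simp only [Mf, Sf, hna, if_false, zpow_zero, mul_one]
    exact Finset.prod_of_isEmpty _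
  | succ k ih =>
    rw [sum_pi_succ]
    calc ∑ w : Fin k → Bool, ∑ b, W p q (Fin.snoc w b) *
          (if a ≤ Mf (extv (Fin.snoc w b)) (k+1) then (p/q)^a else (p/q)^(Sf (extv (Fin.snoc w b)) (k+1)))
        = ∑ w : Fin k → Bool, W p q w *
          (if a ≤ Mf (extv w) k then (p/q)^a else (p/q)^(Sf (extv w) k)) := by
          refine Finset.sum_congr rfl fun w _ => ?_
          by_cases hM : a ≤ Mf (extv w) k
          · have hcond : ∀ b, a ≤ Mf (extv (Fin.snoc w b)) (k+1) := by
              intro b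
              rw [Mf, Mf_extv_snoc w b (le_refl k)]
              exact le_trans hM (le_max_left _ _)
            have he2 : ∀ b : Bool, W p q (Fin.snoc w b) *
                (if a ≤ Mf (extv (Fin.snoc w b)) (k+1) then (p/q)^a
                  else (p/q)^(Sf (extv (Fin.snoc w b)) (k+1)))
                = W p q w * (p/q)^a * wt p q b := by
              intro b
              rw [if_pos (hcond b), W_snoc]
              ring
            simp only [he2]
            rw [← Finset.mul_sum, sum_wt hpq, mul_one, if_pos hM]
          · have hkey : ∀ b : Bool, (if a ≤ Mf (extv (Fin.snoc w b)) (k+1) then (p/q)^a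
                else (p/q)^(Sf (extv (Fin.snoc w b)) (k+1)))
                = (p/q)^(Sf (extv w) k + stp b) := by
              intro b
              have hmax : Mf (extv (Fin.snoc w b)) (k+1)
                  = max (Mf (extv w) k) (Sf (extv w) k + stp b) := by
                rw [Mf, Mf_extv_snoc w b (le_refl k), Sf_extv_snoc_succ]
              rw [Sf_extv_snoc_succ, hmax]
              by_cases h2 : a ≤ max (Mf (extv w) k) (Sf (extv w) k + stp b)
              · have hsM : Sf (extv w) k ≤ Mf (extv w) k := Sf_le_Mf _ _
                have hstp := stp_le_one b
                have : Sf (extv w) k + stp b = a := by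
                  rcases le_max_iff.mp h2 with h | h
                  · omega
                  · omega
                rw [if_pos h2, this]
              · rw [if_neg h2]
            simp only [hkey, W_snoc, if_neg hM]
            have he : ∀ b : Bool, W p q w * wt p q b * (p/q)^(Sf (extv w) k + stp b)
                = W p q w * (wt p q b * (p/q)^(Sf (extv w) k + stp b)) := fun b => by ring
            simp only [he]
            rw [← Finset.mul_sum, step_sum _ hune, hu1, one_mul]
      _ = 1 := ih


/-- probability that the max reaches `a` by time `k` -/
def hh (p q : ℝ) (a : ℤ) (k : ℕ) : ℝ :=
  ∑ v ∈ Finset.univ.filter (fun v : Fin k → Bool => a ≤ Mf (extv v) k), W p q v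

lemma core_split (hpq : p + q = 1) (hp0 : 0 < p) (hq0 : 0 < q) {a : ℤ} (ha : 1 ≤ a) (k : ℕ) :
    (p/q)^a * hh p q a k
      + ∑ v ∈ Finset.univ.filter (fun v : Fin k → Bool => ¬ a ≤ Mf (extv v) k),
          W p q v * (p/q)^(Sf (extv v) k) = 1 := by
  rw [← core hpq hp0 hq0 ha k]
  rw [Finset.sum_congr rfl (fun v _ => mul_ite (a ≤ Mf (extv v) k) (W p q v) ((p/q)^a) ((p/q)^(Sf (extv v) k)))]
  rw [Finset.sum_ite]
  congr 1
  rw [hh, Finset.mul_sum]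
  exact Finset.sum_congr rfl fun v _ => by ring

lemma hh_nonneg (hp0 : 0 ≤ p) (hq0 : 0 ≤ q) (a : ℤ) (k : ℕ) : 0 ≤ hh p q a k :=
  Finset.sum_nonneg fun v _ => W_nonneg hp0 hq0 v

lemma hh_le (hpq : p + q = 1) (hp0 : 0 < p) (hq0 : 0 < q) {a : ℤ} (ha : 1 ≤ a) (k : ℕ) :
    (p/q)^a * hh p q a k ≤ 1 := by
  rw [← core_split hpq hp0 hq0 ha k]
  have h2 : 0 ≤ ∑ v ∈ Finset.univ.filter (fun v : Fin k → Bool => ¬ a ≤ Mf (extv v) k),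
      W p q v * (p/q)^(Sf (extv v) k) :=
    Finset.sum_nonneg fun v _ => mul_nonneg (W_nonneg hp0.le hq0.le v)
      (le_of_lt (zpow_pos (div_pos hp0 hq0) _))
  linarith

lemma hh_ge (hpq : p + q = 1) (hp0 : 0 < p) (hq0 : 0 < q) (hqp : q ≤ p)
    {a : ℤ} (ha : 1 ≤ a) (k : ℕ) :
    1 ≤ (p/q)^a * hh p q a k
      + (Real.sqrt (p/q))^(a-1) * (2 * Real.sqrt (p*q))^k := by
  set θ := Real.sqrt (p/q) with hθdef
  have hu0 : (0:ℝ) < p/q := div_pos hp0 hq0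
  have hθ0 : 0 < θ := Real.sqrt_pos.mpr hu0
  have hθ1 : 1 ≤ θ := by
    rw [hθdef, show (1:ℝ) = Real.sqrt 1 by simp]
    exact Real.sqrt_le_sqrt ((one_le_div hq0).mpr hqp)
  have hθsq : θ^(2:ℤ) = p/q := by
    rw [show (2:ℤ) = 1 + 1 by norm_num, zpow_add₀ (ne_of_gt hθ0), zpow_one, hθdef]
    exact Real.mul_self_sqrt hu0.le
  have hsqpq : 0 ≤ p * q := mul_nonneg hp0.le hq0.le
  have h1 : q * θ = Real.sqrt (p*q) := by
    have e1 : p/q = (p*q)/q^2 := by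
      field_simp
    rw [hθdef, e1, Real.sqrt_div hsqpq, Real.sqrt_sq hq0.le]
    field_simp
  have h2 : p * θ⁻¹ = Real.sqrt (p*q) := by
    have e1 : (p/q)⁻¹ = (p*q)/p^2 := by
      field_simp
    rw [hθdef, ← Real.sqrt_inv, e1, Real.sqrt_div hsqpq, Real.sqrt_sq hp0.le]
    field_simp
  have hx : q*θ + p*θ⁻¹ = 2 * Real.sqrt (p*q) := by
    rw [h1, h2]
    ring
  rw [← core_split hpq hp0 hq0 ha k]
  have hmain : ∑ v ∈ Finset.univ.filter (fun v : Fin k → Bool => ¬ a ≤ Mf (extv v) k),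
      W p q v * (p/q)^(Sf (extv v) k) ≤ θ^(a-1) * (2 * Real.sqrt (p*q))^k := by
    rw [← hx, ← chern hpq θ (ne_of_gt hθ0) k, Finset.mul_sum]
    calc ∑ v ∈ Finset.univ.filter (fun v : Fin k → Bool => ¬ a ≤ Mf (extv v) k),
          W p q v * (p/q)^(Sf (extv v) k)
        ≤ ∑ v ∈ Finset.univ.filter (fun v : Fin k → Bool => ¬ a ≤ Mf (extv v) k),
          θ^(a-1) * (W p q v * θ^(Sf (extv v) k)) := by
          refine Finset.sum_le_sum fun v hv => ?_
          have hS : Sf (extv v) k ≤ a - 1 := by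
            simp only [Finset.mem_filter] at hv
            have := Sf_le_Mf (extv v) k
            omega
          have hzz : (p/q)^(Sf (extv v) k) ≤ θ^(a-1) * θ^(Sf (extv v) k) := by
            rw [← hθsq, ← zpow_mul]
            have h2S : θ^(2 * Sf (extv v) k) = θ^(Sf (extv v) k) * θ^(Sf (extv v) k) := by
              rw [← zpow_add₀ (ne_of_gt hθ0)]
              ring_nf
            rw [h2S]
            apply mul_le_mul_of_nonneg_right _ (le_of_lt (zpow_pos hθ0 _))
            exact zpow_le_zpow_right₀ hθ1 hS
          calc W p q v * (p/q)^(Sf (extv v) k)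
              ≤ W p q v * (θ^(a-1) * θ^(Sf (extv v) k)) :=
                mul_le_mul_of_nonneg_left hzz (W_nonneg hp0.le hq0.le v)
            _ = θ^(a-1) * (W p q v * θ^(Sf (extv v) k)) := by ring
      _ ≤ ∑ v : Fin k → Bool, θ^(a-1) * (W p q v * θ^(Sf (extv v) k)) := by
          apply Finset.sum_le_sum_of_subset_of_nonneg (Finset.filter_subset _ _)
          intro v _ _
          exact mul_nonneg (le_of_lt (zpow_pos hθ0 _))
            (mul_nonneg (W_nonneg hp0.le hq0.le v) (le_of_lt (zpow_pos hθ0 _)))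
  linarith


lemma extv_comp_rev {k : ℕ} (v : Fin k → Bool) {i : ℕ} (h : i < k) :
    extv (v ∘ Fin.rev) i = revN k (extv v) i := by
  have h' : k - 1 - i < k := by omega
  simp only [extv, revN, dif_pos h, dif_pos h', Function.comp_apply]
  congr 1
  ext
  simp [Fin.val_rev]
  omega

lemma Zf_rev_eq_Mf {k : ℕ} (v : Fin k → Bool) :
    (Zf (extv (v ∘ Fin.rev)) k : ℤ) = Mf (extv v) k := by
  rw [Zf_congr (fun i hi => extv_comp_rev v hi)]
  exact Zf_rev (extv v) k

lemma W_comp_rev {k : ℕ} (v : Fin k → Bool) : W p q (v ∘ Fin.rev) = W p q v := by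
  unfold W
  exact Fintype.prod_equiv (Fin.revPerm) _ _ (fun i => rfl)

lemma sum_Z_eq_sum_M (p q : ℝ) {k : ℕ} (l : ℕ) :
    ∑ v ∈ Finset.univ.filter (fun v : Fin k → Bool => Zf (extv v) k = l), W p q v
      = ∑ v ∈ Finset.univ.filter (fun v : Fin k → Bool => Mf (extv v) k = (l:ℤ)), W p q v := by
  apply Finset.sum_nbij' (fun v => v ∘ Fin.rev) (fun v => v ∘ Fin.rev)
  · intro v hv
    simp only [Finset.mem_filter, Finset.mem_univ, true_and] at hv ⊢
    have := Zf_rev_eq_Mf (v ∘ Fin.rev)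
    rw [show (v ∘ Fin.rev) ∘ Fin.rev = v from funext fun i => by simp [Fin.rev_rev]] at this
    rw [hv] at this
    exact this.symm
  · intro v hv
    simp only [Finset.mem_filter, Finset.mem_univ, true_and] at hv ⊢
    have := Zf_rev_eq_Mf v
    rw [hv] at this
    exact_mod_cast this
  · intro v _
    exact funext fun i => by simp [Fin.rev_rev]
  · intro v _
    exact funext fun i => by simp [Fin.rev_rev]
  · intro v _
    exact (W_comp_rev v).symm

lemma sum_M_split (hp0 : 0 ≤ p) (hq0 : 0 ≤ q) {k : ℕ} (l : ℤ) :
    ∑ v ∈ Finset.univ.filter (fun v : Fin k → Bool => Mf (extv v) k = l), W p q v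
      = hh p q l k - hh p q (l+1) k := by
  rw [eq_sub_iff_add_eq, hh, hh]
  rw [← Finset.sum_union]
  · congr 1
    ext v
    simp only [Finset.mem_union, Finset.mem_filter, Finset.mem_univ, true_and]
    omega
  · rw [Finset.disjoint_left]
    intro v h1 h2
    simp only [Finset.mem_filter, Finset.mem_univ, true_and] at h1 h2
    omega


/-- per-k bound on the probability that the max equals l at time k -/
lemma mk_bound (hpq : p + q = 1) (hp0 : 0 < p) (hq0 : 0 < q) (hqp : q ≤ p)
    {l : ℕ} (hl : 1 ≤ l) (k : ℕ) :
    ∑ v ∈ Finset.univ.filter (fun v : Fin k → Bool => Zf (extv v) k = l), W p q v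
      ≤ (q/p)^l - (q/p)^(l+1)
        + (q/p)^(l+1) * (Real.sqrt (p/q))^l * (2 * Real.sqrt (p*q))^k := by
  have hu0 : (0:ℝ) < p/q := div_pos hp0 hq0
  have hr0 : (0:ℝ) < q/p := div_pos hq0 hp0
  have hru : (q/p) = (p/q)⁻¹ := by
    rw [inv_div]
  have hl1 : (1:ℤ) ≤ (l:ℤ) := by exact_mod_cast hl
  have hl2 : (1:ℤ) ≤ (l:ℤ) + 1 := by omega
  rw [sum_Z_eq_sum_M, sum_M_split hp0.le hq0.le]
  have hinv1 : ((p/q)^((l:ℤ)))⁻¹ = (q/p)^l := by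
    rw [hru, ← inv_zpow, zpow_natCast]
  have hinv2 : ((p/q)^((l:ℤ)+1))⁻¹ = (q/p)^(l+1) := by
    rw [hru, ← inv_zpow, show (l:ℤ)+1 = ((l+1 : ℕ) : ℤ) by push_cast; ring, zpow_natCast]
  have hpow1 : (0:ℝ) < (p/q)^(l:ℤ) := zpow_pos hu0 _
  have hpow2 : (0:ℝ) < (p/q)^((l:ℤ)+1) := zpow_pos hu0 _
  -- bound hh l k from above
  have hb1 : hh p q (l:ℤ) k ≤ (q/p)^l := by
    have h1 := hh_le hpq hp0 hq0 hl1 k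
    rw [← hinv1, inv_eq_one_div]
    rw [le_div_iff₀ hpow1, mul_comm]
    exact h1
  -- bound hh (l+1) k from below
  have hb2 : (q/p)^(l+1) - (q/p)^(l+1) * (Real.sqrt (p/q))^l * (2 * Real.sqrt (p*q))^k
      ≤ hh p q ((l:ℤ)+1) k := by
    have h2 := hh_ge hpq hp0 hq0 hqp hl2 k
    have hθl : ((l:ℤ)+1-1) = (l:ℤ) := by ring
    rw [hθl, zpow_natCast] at h2
    have h3 : (1:ℝ) - (Real.sqrt (p/q))^l * (2*Real.sqrt (p*q))^k
        ≤ (p/q)^((l:ℤ)+1) * hh p q ((l:ℤ)+1) k := by linarith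
    have h4 := mul_le_mul_of_nonneg_left h3 (inv_pos.mpr hpow2).le
    rw [← mul_assoc, inv_mul_cancel₀ (ne_of_gt hpow2), one_mul] at h4
    calc (q/p)^(l+1) - (q/p)^(l+1) * (Real.sqrt (p/q))^l * (2 * Real.sqrt (p*q))^k
        = ((p/q)^((l:ℤ)+1))⁻¹ * (1 - (Real.sqrt (p/q))^l * (2*Real.sqrt (p*q))^k) := by
          rw [hinv2]; ring
      _ ≤ hh p q ((l:ℤ)+1) k := h4
  linarith


/-- the summed bound, fully in the reals -/
lemma total_bound (hpq : p + q = 1) (hp : 1/2 < p) (hp1 : p < 1)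
    {l n : ℕ} (hl : 1 ≤ l) (hn : l ≤ n) :
    ∑ k ∈ Finset.Icc l n,
        (∑ v ∈ Finset.univ.filter (fun v : Fin k → Bool => Zf (extv v) k = l), W p q v)
      ≤ ((n:ℝ) - l + 1) * ((1 - q/p) / (1 - (q/p)^(l+1))) * (q/p)^l
        + (2 * Real.sqrt (p*q) / (1 - 2 * Real.sqrt (p*q))^2) * (2*q)^l := by
  have hp0 : (0:ℝ) < p := by linarith
  have hq0 : (0:ℝ) < q := by linarith
  have hqp : q < p := by linarith
  have hr0 : (0:ℝ) < q/p := div_pos hq0 hp0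
  have hr1 : q/p < 1 := (div_lt_one hp0).mpr hqp
  set x := 2 * Real.sqrt (p*q) with hxdef
  set θ := Real.sqrt (p/q) with hθdef
  set r := q/p with hrdef
  have hx0 : 0 ≤ x := by positivity
  have hx1 : x < 1 := by
    have h1 : Real.sqrt (p*q) ^ 2 = p*q := Real.sq_sqrt (by positivity)
    have h2 : 0 ≤ Real.sqrt (p*q) := Real.sqrt_nonneg _
    rw [hxdef]
    nlinarith [sq_nonneg (p - q)]
  have hθ0 : 0 < θ := Real.sqrt_pos.mpr (div_pos hp0 hq0)
  -- the geometric sum bound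
  have hgeom : ∑ k ∈ Finset.Icc l n, x^k ≤ x^l / (1-x) := by
    rw [← Finset.Ico_add_one_right_eq_Icc, Finset.sum_Ico_eq_sum_range]
    have : ∀ j ∈ Finset.range (n+1-l), x^(l+j) = x^l * x^j := fun j _ => pow_add x l j
    rw [Finset.sum_congr rfl this, ← Finset.mul_sum]
    rw [div_eq_mul_inv, inv_eq_one_div]
    apply mul_le_mul_of_nonneg_left _ (pow_nonneg hx0 l)
    rw [geom_sum_eq (ne_of_lt hx1)]
    have heq : (x^(n+1-l) - 1)/(x-1) = (1 - x^(n+1-l))/(1-x) := by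
      rw [div_eq_div_iff (by linarith) (by linarith)]
      ring
    rw [heq, div_le_div_iff₀ (by linarith) (by linarith)]
    have : x^(n+1-l) ≥ 0 := pow_nonneg hx0 _
    nlinarith
  -- key identity r^(l+1) * θ^l * x^l = r * (2q)^l
  have hkey : r^(l+1) * θ^l * x^l = r * (2*q)^l := by
    have h1 : r * (θ * x) = 2*q := by
      have hθx : θ * x = 2 * p := by
        rw [hθdef, hxdef, show √(p/q) * (2*√(p*q)) = 2*(√(p/q) * √(p*q)) by ring,
          ← Real.sqrt_mul (by positivity)]
        have : p/q*(p*q) = p^2 := by field_simp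
        rw [this, Real.sqrt_sq hp0.le]
      rw [hθx, hrdef]
      field_simp
    calc r^(l+1) * θ^l * x^l = r * (r*(θ*x))^l := by rw [mul_pow, mul_pow, pow_succ]; ring
      _ = r * (2*q)^l := by rw [h1]
  -- sum the per-k bounds
  have hsum : ∑ k ∈ Finset.Icc l n,
      (∑ v ∈ Finset.univ.filter (fun v : Fin k → Bool => Zf (extv v) k = l), W p q v)
      ≤ ((n:ℝ) - l + 1) * (r^l - r^(l+1)) + r * (2*q)^l / (1-x) := by
    calc ∑ k ∈ Finset.Icc l n,
        (∑ v ∈ Finset.univ.filter (fun v : Fin k → Bool => Zf (extv v) k = l), W p q v)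
        ≤ ∑ k ∈ Finset.Icc l n, ((r^l - r^(l+1)) + r^(l+1) * θ^l * x^k) :=
          Finset.sum_le_sum fun k _ => mk_bound hpq hp0 hq0 hqp.le hl k
      _ = ((Finset.Icc l n).card : ℝ) * (r^l - r^(l+1))
            + r^(l+1) * θ^l * ∑ k ∈ Finset.Icc l n, x^k := by
          rw [Finset.sum_add_distrib, Finset.sum_const, nsmul_eq_mul, Finset.mul_sum]
      _ ≤ ((n:ℝ) - l + 1) * (r^l - r^(l+1)) + r^(l+1) * θ^l * (x^l/(1-x)) := by
          have hcard : ((Finset.Icc l n).card : ℝ) = (n:ℝ) - l + 1 := by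
            rw [Nat.card_Icc]
            have : l ≤ n + 1 := by omega
            push_cast [Nat.cast_sub this]
            ring
          rw [hcard]
          have : r^(l+1) * θ^l * ∑ k ∈ Finset.Icc l n, x^k ≤ r^(l+1) * θ^l * (x^l/(1-x)) := by
            apply mul_le_mul_of_nonneg_left hgeom (by positivity)
          linarith
      _ = ((n:ℝ) - l + 1) * (r^l - r^(l+1)) + r * (2*q)^l / (1-x) := by
          rw [show r^(l+1) * θ^l * (x^l/(1-x)) = r^(l+1) * θ^l * x^l/(1-x) by ring, hkey]
  refine le_trans hsum ?_
  -- final arithmetic comparison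
  have hA : ((n:ℝ) - l + 1) * (r^l - r^(l+1)) ≤ ((n:ℝ) - l + 1) * ((1 - r) / (1 - r^(l+1))) * r^l := by
    have hnl : (0:ℝ) ≤ (n:ℝ) - l + 1 := by
      have : (l:ℝ) ≤ n := by exact_mod_cast hn
      linarith
    have hrl1 : r^(l+1) < 1 := pow_lt_one₀ hr0.le hr1 (by omega)
    have hrl0 : 0 < 1 - r^(l+1) := by linarith
    have h1r : (1 - r) ≤ (1 - r) / (1 - r^(l+1)) := by
      rw [le_div_iff₀ hrl0]
      nlinarith [pow_nonneg hr0.le (l+1)]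
    calc ((n:ℝ) - l + 1) * (r^l - r^(l+1))
        = ((n:ℝ) - l + 1) * (1-r) * r^l := by ring_nf
      _ ≤ ((n:ℝ) - l + 1) * ((1 - r) / (1 - r^(l+1))) * r^l := by
          apply mul_le_mul_of_nonneg_right _ (pow_nonneg hr0.le l)
          exact mul_le_mul_of_nonneg_left h1r hnl
  have hB : r * (2*q)^l / (1-x) ≤ x / (1-x)^2 * (2*q)^l := by
    have hrx : r ≤ x := by
      have h1 : q ≤ Real.sqrt (p*q) := by
        rw [show p*q = q*p by ring]
        calc q = Real.sqrt (q*q) := by rw [Real.sqrt_mul_self hq0.le]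
          _ ≤ Real.sqrt (q*p) := Real.sqrt_le_sqrt (by nlinarith)
      have h2 : r = q/p := rfl
      rw [h2, div_le_iff₀ hp0]
      calc q ≤ Real.sqrt (p*q) := h1
        _ = 2 * Real.sqrt (p*q) * (1/2) := by ring
        _ ≤ 2 * Real.sqrt (p*q) * p := by
            apply mul_le_mul_of_nonneg_left (by linarith) (by positivity)
        _ = x * p := by rw [hxdef]
    have h1x : (0:ℝ) < 1 - x := by linarith
    rw [div_le_iff₀ h1x]
    have hq2l : (0:ℝ) ≤ (2*q)^l := by positivity
    have hxx : x ≤ x / (1-x) := by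
      rw [le_div_iff₀ h1x]
      nlinarith [sq_nonneg x]
    calc r * (2*q)^l ≤ (x/(1-x)) * (2*q)^l := by
          apply mul_le_mul_of_nonneg_right (le_trans hrx hxx) hq2l
      _ = x / (1-x)^2 * (2*q)^l * (1-x) := by
          field_simp
  have hfin : (2 * Real.sqrt (p*q) / (1 - 2 * Real.sqrt (p*q))^2) * (2*q)^l = x / (1-x)^2 * (2*q)^l := by
    rw [hxdef]
  linarith

end Weights


section Meas

open MeasureTheory ProbabilityTheory

variable {Ω : Type*} [MeasurableSpace Ω] (μ : Measure Ω) [IsProbabilityMeasure μ]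
variable (ξ : ℕ → Ω → Bool)

/-- cylinder set -/
def Cyl (k : ℕ) (v : Fin k → Bool) : Set Ω := {ω | ∀ i : Fin k, ξ (i.1+1) ω = v i}

lemma measurableSet_Cyl (hmeas : ∀ k, Measurable (ξ k)) (k : ℕ) (v : Fin k → Bool) :
    MeasurableSet (Cyl ξ k v) := by
  have : Cyl ξ k v = ⋂ i : Fin k, (ξ (i.1+1)) ⁻¹' {v i} := by
    ext ω
    simp [Cyl, Set.mem_iInter, Set.mem_preimage]
  rw [this]
  exact MeasurableSet.iInter fun i => (hmeas _) (measurableSet_singleton _)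

variable {p q : ℝ}

lemma meas_single (hpq : p + q = 1) (hq0 : 0 ≤ q) (hq1 : q ≤ 1)
    (hmeas : ∀ k, Measurable (ξ k))
    (hdist : ∀ k, 1 ≤ k → μ {ω | ξ k ω = true} = ENNReal.ofReal q)
    {j : ℕ} (hj : 1 ≤ j) (b : Bool) :
    μ (ξ j ⁻¹' {b}) = ENNReal.ofReal (wt p q b) := by
  cases b
  · have hc : ξ j ⁻¹' {false} = (ξ j ⁻¹' {true})ᶜ := by
      ext ω
      simp [Set.mem_preimage]
    rw [hc, measure_compl ((hmeas j) (measurableSet_singleton true)) (measure_ne_top μ _),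
      measure_univ]
    have ht : ξ j ⁻¹' {true} = {ω | ξ j ω = true} := rfl
    rw [ht, hdist j hj]
    rw [show wt p q false = p from rfl, show p = 1 - q by linarith]
    rw [← ENNReal.ofReal_one, ← ENNReal.ofReal_sub _ hq0]
  · exact hdist j hj

lemma meas_Cyl (hpq : p + q = 1) (hq0 : 0 ≤ q) (hq1 : q ≤ 1)
    (hmeas : ∀ k, Measurable (ξ k))
    (hindep : iIndepFun ξ μ)
    (hdist : ∀ k, 1 ≤ k → μ {ω | ξ k ω = true} = ENNReal.ofReal q)
    (k : ℕ) (v : Fin k → Bool) :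
    μ (Cyl ξ k v) = ENNReal.ofReal (W p q v) := by
  classical
  set s : Finset ℕ := (Finset.range k).image (· + 1) with hsdef
  have key := hindep.measure_inter_preimage_eq_mul (μ := μ) s
    (sets := fun j => {extv v (j-1)}) (fun i _ => measurableSet_singleton _)
  have hset : (⋂ j ∈ s, ξ j ⁻¹' {extv v (j-1)}) = Cyl ξ k v := by
    ext ω
    simp only [Set.mem_iInter, Set.mem_preimage, Set.mem_singleton_iff, hsdef,
      Finset.mem_image, Finset.mem_range, Cyl, Set.mem_setOf_eq]
    constructor
    · intro h i
      have := h (i.1+1) ⟨i.1, i.isLt, rfl⟩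
      rw [this]
      simp only [Nat.add_sub_cancel, extv, dif_pos i.isLt]
    · rintro h j ⟨i, hik, rfl⟩
      simp only [Nat.add_sub_cancel, extv, dif_pos hik]
      exact h ⟨i, hik⟩
  rw [hset] at key
  rw [key]
  rw [Finset.prod_image (by intro a _ b _ h; simp only at h; omega)]
  have hfac : ∀ i ∈ Finset.range k,
      μ (ξ (i+1) ⁻¹' {extv v ((i+1)-1)}) = ENNReal.ofReal (wt p q (extv v i)) := by
    intro i hi
    rw [Nat.add_sub_cancel]
    exact meas_single μ ξ hpq hq0 hq1 hmeas hdist (by omega) _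
  rw [Finset.prod_congr rfl hfac, ← ENNReal.ofReal_prod_of_nonneg
    (fun i _ => wt_nonneg (by linarith) hq0 _)]
  congr 1
  rw [W, ← Fin.prod_univ_eq_prod_range (fun i => wt p q (extv v i)) k]
  exact Finset.prod_congr rfl fun i _ => by rw [extv, dif_pos i.isLt]

lemma meas_Zset (hpq : p + q = 1) (hq0 : 0 ≤ q) (hq1 : q ≤ 1)
    (hmeas : ∀ k, Measurable (ξ k))
    (hindep : iIndepFun ξ μ)
    (hdist : ∀ k, 1 ≤ k → μ {ω | ξ k ω = true} = ENNReal.ofReal q)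
    (k l : ℕ) :
    μ {ω | Zf (fun i => ξ (i+1) ω) k = l}
      = ENNReal.ofReal (∑ v ∈ Finset.univ.filter
          (fun v : Fin k → Bool => Zf (extv v) k = l), W p q v) := by
  classical
  set F := Finset.univ.filter (fun v : Fin k → Bool => Zf (extv v) k = l) with hF
  have hsets : {ω | Zf (fun i => ξ (i+1) ω) k = l} = ⋃ v ∈ F, Cyl ξ k v := by
    ext ω
    simp only [Set.mem_setOf_eq, Set.mem_iUnion]
    constructor
    · intro h
      refine ⟨fun i => ξ (i.1+1) ω, ?_, fun i => rfl⟩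
      rw [hF, Finset.mem_filter]
      refine ⟨Finset.mem_univ _, ?_⟩
      rw [← h]
      apply Zf_congr
      intro i hik
      simp only [extv, dif_pos hik]
    · rintro ⟨v, hv, hω⟩
      rw [hF, Finset.mem_filter] at hv
      rw [← hv.2]
      apply Zf_congr
      intro i hik
      rw [extv, dif_pos hik]
      exact (hω ⟨i, hik⟩)
  rw [hsets, measure_biUnion_finset ?_ (fun v _ => measurableSet_Cyl ξ hmeas k v)]
  · rw [Finset.sum_congr rfl (fun v _ => meas_Cyl μ ξ hpq hq0 hq1 hmeas hindep hdist k v)]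
    exact (ENNReal.ofReal_sum_of_nonneg (fun v _ => W_nonneg (by linarith) hq0 v)).symm
  · intro v _ w _ hvw
    rw [Function.onFun]
    rw [Set.disjoint_left]
    intro ω h1 h2
    exact hvw (funext fun i => by rw [← h1 i, ← h2 i])

end Meas

end Stmt0Aux

open MeasureTheory ProbabilityTheory

open Stmt0Aux in
/-- Upper bound on the probability that the one-sided random walk
visits state `l` within its first `n` steps. -/
theorem stmt_0
    {Ω : Type*} [MeasurableSpace Ω] (μ : Measure Ω) [IsProbabilityMeasure μ]
    (p q : ℝ) (hp : 1/2 < p) (hp1 : p < 1) (hq : q = 1 - p)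
    (ξ : ℕ → Ω → Bool) (hmeas : ∀ k, Measurable (ξ k))
    (hindep : iIndepFun ξ μ)
    (hdist : ∀ k, 1 ≤ k → μ {ω | ξ k ω = true} = ENNReal.ofReal q)
    (Z : ℕ → Ω → ℕ)
    (hZ0 : ∀ ω, Z 0 ω = 0)
    (hZ : ∀ k ω, Z (k+1) ω = if ξ (k+1) ω then Z k ω + 1 else Z k ω - 1)
    (l n : ℕ) (hl : 1 ≤ l) (hn : l ≤ n) :
    μ {ω | ∃ k, 1 ≤ k ∧ k ≤ n ∧ Z k ω = l} ≤
      ENNReal.ofReal (((n : ℝ) - l + 1) * ((1 - q/p) / (1 - (q/p)^(l+1))) * (q/p)^l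
        + (2 * Real.sqrt (p*q) / (1 - 2 * Real.sqrt (p*q))^2) * (2*q)^l) := by
  classical
  have hq0 : (0:ℝ) < q := by rw [hq]; linarith
  have hq1 : q ≤ 1 := by rw [hq]; linarith
  have hpq : p + q = 1 := by rw [hq]; ring
  have hZf : ∀ k ω, Z k ω = Zf (fun i => ξ (i+1) ω) k := by
    intro k
    induction k with
    | zero =>
      intro ω
      rw [hZ0 ω]
      rfl
    | succ k ih =>
      intro ω
      rw [hZ k ω, ih ω]
      rfl
  have hsub : {ω | ∃ k, 1 ≤ k ∧ k ≤ n ∧ Z k ω = l} ⊆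
      ⋃ k ∈ Finset.Icc l n, {ω | Zf (fun i => ξ (i+1) ω) k = l} := by
    rintro ω ⟨k, hk1, hk2, hk3⟩
    have hzf : Zf (fun i => ξ (i+1) ω) k = l := by rw [← hZf k ω]; exact hk3
    have hlk : l ≤ k := hzf ▸ Zf_le _ k
    exact Set.mem_biUnion (Finset.mem_Icc.mpr ⟨hlk, hk2⟩) hzf
  calc μ {ω | ∃ k, 1 ≤ k ∧ k ≤ n ∧ Z k ω = l}
      ≤ μ (⋃ k ∈ Finset.Icc l n, {ω | Zf (fun i => ξ (i+1) ω) k = l}) := measure_mono hsub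
    _ ≤ ∑ k ∈ Finset.Icc l n, μ {ω | Zf (fun i => ξ (i+1) ω) k = l} :=
        measure_biUnion_finset_le _ _
    _ = ∑ k ∈ Finset.Icc l n, ENNReal.ofReal (∑ v ∈ Finset.univ.filter
          (fun v : Fin k → Bool => Zf (extv v) k = l), W p q v) :=
        Finset.sum_congr rfl fun k _ => meas_Zset μ ξ hpq hq0.le hq1 hmeas hindep hdist k l
    _ = ENNReal.ofReal (∑ k ∈ Finset.Icc l n, ∑ v ∈ Finset.univ.filter
          (fun v : Fin k → Bool => Zf (extv v) k = l), W p q v) :=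
        (ENNReal.ofReal_sum_of_nonneg fun k _ =>
          Finset.sum_nonneg fun v _ => W_nonneg (by linarith) hq0.le v).symm
    _ ≤ ENNReal.ofReal (((n : ℝ) - l + 1) * ((1 - q/p) / (1 - (q/p)^(l+1))) * (q/p)^l
        + (2 * Real.sqrt (p*q) / (1 - 2 * Real.sqrt (p*q))^2) * (2*q)^l) :=
        ENNReal.ofReal_le_ofReal (total_bound hpq hp hp1 hl hn)
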